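/- Let p be a point and X a finite set of points with p ∉ convexHull(X), all points of X at distinct directions from p (no two points of X ∪ {p} collinear with p). Suppose the angular extent of X about p is less than π, i.e., X is contained in an open half-plane whose boundary passes through p. Let a be the first and b the last point of X in clockwise radial order about p. Then X lies in the closed convex cone with apex p spanned by the rays p→a and p→b, and a and b are vertices of the convex hull of X. -/

import Mathlib

open scoped Classical

noncomputable section

abbrev Pt : Type := ℝ × ℝ

/-- Signed value of `z` with respect to the line `a x + b y + c = 0`. -/
def sideVal (a b c : ℝ) (z : Pt) : ℝ := a * z.1 + b * z.2 + c

/-- The segment `[u,v]` crosses the line: endpoints strictly on opposite sides. -/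
def crossesLine (a b c : ℝ) (u v : Pt) : Prop := sideVal a b c u * sideVal a b c v < 0

/-- Planar determinant of two vectors. -/
def det2 (u v : Pt) : ℝ := u.1 * v.2 - u.2 * v.1

/-- `w` lies in the closed convex cone spanned by `u` and `v`. -/
def memCone (u v w : Pt) : Prop := ∃ s t : ℝ, 0 ≤ s ∧ 0 ≤ t ∧ w = s • u + t • v

/-- No three points of `X` are collinear. -/
def GenPos (X : Finset Pt) : Prop :=
  ∀ x ∈ X, ∀ y ∈ X, ∀ z ∈ X, x ≠ y → x ≠ z → y ≠ z → ¬ Collinear ℝ ({x, y, z} : Set Pt)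

/-- Edges of a straight-line path visiting the points of `l` in order. -/
def pathEdges (l : List Pt) : List (Pt × Pt) := l.zip l.tail

def segOf (e : Pt × Pt) : Set Pt := segment ℝ e.1 e.2

/-- Non-adjacent edges are disjoint; adjacent edges meet only at the shared vertex. -/
def NonSelfIntersecting (l : List Pt) : Prop :=
  (∀ i j, ∀ hi : i < (pathEdges l).length, ∀ hj : j < (pathEdges l).length, i + 1 < j →
    segOf ((pathEdges l).get ⟨i, hi⟩) ∩ segOf ((pathEdges l).get ⟨j, hj⟩) = ∅) ∧
  (∀ i, ∀ hi : i < (pathEdges l).length, ∀ hj : i + 1 < (pathEdges l).length,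
    segOf ((pathEdges l).get ⟨i, hi⟩) ∩ segOf ((pathEdges l).get ⟨i + 1, hj⟩)
      = {((pathEdges l).get ⟨i + 1, hj⟩).1})

/-- Number of edges of the path crossing the line `a x + b y + c = 0`. -/
def crossCount (a b c : ℝ) (l : List Pt) : ℕ :=
  ((pathEdges l).filter (fun e => decide (crossesLine a b c e.1 e.2))).length

/-- The `i`-th edge of the cycle on the points of `l` (indices mod `l.length`). -/
def cEdge (l : List Pt) (i : ℕ) (hi : i < l.length) : Set Pt :=
  segment ℝ (l.get ⟨i, hi⟩)
    (l.get ⟨(i + 1) % l.length, Nat.mod_lt _ (Nat.lt_of_le_of_lt (Nat.zero_le i) hi)⟩)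

/-- Simple polygon condition for the cycle through `l`. -/
def CycleNSI (l : List Pt) : Prop :=
  ∀ i j, ∀ hi : i < l.length, ∀ hj : j < l.length, i ≠ j →
    ((i + 1) % l.length = j → cEdge l i hi ∩ cEdge l j hj = {l.get ⟨j, hj⟩}) ∧
    ((j + 1) % l.length = i → cEdge l i hi ∩ cEdge l j hj = {l.get ⟨i, hi⟩}) ∧
    ((i + 1) % l.length ≠ j → (j + 1) % l.length ≠ i → cEdge l i hi ∩ cEdge l j hj = ∅)

/-- Number of edges of the cycle on `l` crossing the line. -/
def cycleCrossCount (a b c : ℝ) (l : List Pt) : ℕ :=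
  (Finset.univ.filter (fun i : Fin l.length =>
    crossesLine a b c (l.get i)
      (l.get ⟨(i.1 + 1) % l.length,
        Nat.mod_lt _ (Nat.lt_of_le_of_lt (Nat.zero_le i.1) i.2)⟩))).card

lemma det2_eq_zero_dep {u v : Pt} (hu : u ≠ 0) (h : det2 u v = 0) : ∃ c : ℝ, v = c • u := by
  simp only [det2, sub_eq_zero] at h
  by_cases h1 : u.1 = 0
  · have h2 : u.2 ≠ 0 := fun h2 => hu (Prod.ext h1 h2)
    refine ⟨v.2 / u.2, Prod.ext ?_ ?_⟩ <;> simp only [Prod.smul_fst, Prod.smul_snd, smul_eq_mul]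
    · rw [h1] at h; simp at h
      rcases h with h | h
      · exact absurd h h2
      · simp [h1, h]
    · field_simp
  · refine ⟨v.1 / u.1, Prod.ext ?_ ?_⟩ <;> simp only [Prod.smul_fst, Prod.smul_snd, smul_eq_mul]
    · field_simp
    · field_simp; linarith [h]

lemma collinear_of_dep {p a y : Pt} (c : ℝ) (h : y - p = c • (a - p)) :
    Collinear ℝ ({p, a, y} : Set Pt) := by
  rw [collinear_iff_of_mem (Set.mem_insert p {a, y})]
  refine ⟨a - p, ?_⟩
  rintro q (rfl | rfl | rfl)
  · exact ⟨0, by simp⟩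
  · exact ⟨1, by simp⟩
  · exact ⟨c, by rw [← h]; simp⟩

lemma div_nonneg_np {x y : ℝ} (hx : x ≤ 0) (hy : y ≤ 0) : 0 ≤ x / y := by
  have := div_nonneg (neg_nonneg.2 hx) (neg_nonneg.2 hy)
  rwa [neg_div_neg_eq] at this

lemma cramer {A B w : Pt} (hD : det2 A B ≠ 0) :
    w = (det2 w B / det2 A B) • A + (det2 A w / det2 A B) • B := by
  have hD' : A.1 * B.2 - A.2 * B.1 ≠ 0 := hD
  refine Prod.ext ?_ ?_ <;>
    simp only [Prod.fst_add, Prod.snd_add, Prod.smul_fst, Prod.smul_snd, smul_eq_mul, det2] <;>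
    rw [div_mul_eq_mul_div, div_mul_eq_mul_div, ← add_div, eq_div_iff hD'] <;> ring


/-- If `X` lies in an open half-plane through `p` and `a`, `b` are the radially
extreme points, then `X` lies in the cone spanned by `p→a` and `p→b`, and `a`, `b`
are vertices of the convex hull of `X`. -/
theorem stmt15 (p : Pt) (X : Finset Pt)
    (hpX : p ∉ convexHull ℝ ((X : Finset Pt) : Set Pt))
    (hdir : ∀ x ∈ X, ∀ y ∈ X, x ≠ y → ¬ Collinear ℝ ({p, x, y} : Set Pt))
    (u : Pt) (hu : u ≠ 0) (hhalf : ∀ x ∈ X, 0 < det2 u (x - p))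
    (a bpt : Pt) (ha : a ∈ X) (hb : bpt ∈ X)
    (hfirst : ∀ x ∈ X, det2 (a - p) (x - p) ≤ 0)
    (hlast : ∀ x ∈ X, det2 (x - p) (bpt - p) ≤ 0) :
    (∀ x ∈ X, memCone (a - p) (bpt - p) (x - p)) ∧
    a ∉ convexHull ℝ ((X.erase a : Finset Pt) : Set Pt) ∧
    bpt ∉ convexHull ℝ ((X.erase bpt : Finset Pt) : Set Pt) := by
  
  -- basic nondegeneracy
  have hap : a - p ≠ 0 := by
    intro h
    have := hhalf a ha
    rw [h] at this; simp [det2] at this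
  have hbp : bpt - p ≠ 0 := by
    intro h
    have := hhalf bpt hb
    rw [h] at this; simp [det2] at this
  have key : ∀ x ∈ X, x ≠ a → det2 (a - p) (x - p) < 0 := by
    intro x hx hxa
    rcases lt_or_eq_of_le (hfirst x hx) with h | h
    · exact h
    · exfalso
      obtain ⟨c, hc⟩ := det2_eq_zero_dep hap h
      exact hdir a ha x hx (Ne.symm hxa) (collinear_of_dep c hc)
  have key' : ∀ x ∈ X, x ≠ bpt → det2 (x - p) (bpt - p) < 0 := by
    intro x hx hxb
    rcases lt_or_eq_of_le (hlast x hx) with h | h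
    · exact h
    · exfalso
      have h' : det2 (bpt - p) (x - p) = 0 := by
        simp only [det2] at h ⊢; linarith
      obtain ⟨c, hc⟩ := det2_eq_zero_dep hbp h'
      exact hdir bpt hb x hx (Ne.symm hxb) (collinear_of_dep c hc)
  refine ⟨?_, ?_, ?_⟩
  · -- cone
    intro x hx
    by_cases hab : a = bpt
    · -- then X = {a}
      have hxa : x = a := by
        by_contra hxa
        have h1 := key x hx hxa
        have h2 := key' x hx (fun h => hxa (h.trans hab.symm))
        rw [← hab] at h2
        simp only [det2] at h1 h2
        linarith
      exact ⟨1, 0, zero_le_one, le_refl 0, by rw [hxa]; simp⟩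
    · have hD : det2 (a - p) (bpt - p) < 0 := key bpt hb (fun h => hab h.symm)
      have hDne : det2 (a - p) (bpt - p) ≠ 0 := ne_of_lt hD
      refine ⟨det2 (x - p) (bpt - p) / det2 (a - p) (bpt - p),
        det2 (a - p) (x - p) / det2 (a - p) (bpt - p), ?_, ?_, cramer hDne⟩
      · exact div_nonneg_np (hlast x hx) hD.le
      · exact div_nonneg_np (hfirst x hx) hD.le
  · -- a is a vertex
    intro hmem
    set g : Pt → ℝ := fun z => (a - p).1 * z.2 - (a - p).2 * z.1 with hg
    have hlin : IsLinearMap ℝ g := by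
      constructor
      · intro z w; simp [hg, Prod.fst_add, Prod.snd_add]; ring
      · intro c z; simp [hg, Prod.smul_fst, Prod.smul_snd, smul_eq_mul]; ring
    have hconv : Convex ℝ {w : Pt | g w < g p} := convex_halfSpace_lt hlin (g p)
    have hsub : ((X.erase a : Finset Pt) : Set Pt) ⊆ {w : Pt | g w < g p} := by
      intro y hy
      simp only [Finset.coe_erase, Set.mem_diff, Set.mem_singleton_iff, Finset.mem_coe] at hy
      have := key y hy.1 hy.2
      simp only [det2, hg, Set.mem_setOf_eq] at this ⊢
      have e1 : (y - p).1 = y.1 - p.1 := rfl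
      have e2 : (y - p).2 = y.2 - p.2 := rfl
      rw [e1, e2] at this
      linarith
    have := hconv.convexHull_subset_iff.2 hsub hmem
    simp only [Set.mem_setOf_eq, hg] at this
    have e1 : (a - p).1 = a.1 - p.1 := rfl
    have e2 : (a - p).2 = a.2 - p.2 := rfl
    rw [e1, e2] at this
    nlinarith
  · -- bpt is a vertex
    intro hmem
    set g : Pt → ℝ := fun z => z.1 * (bpt - p).2 - z.2 * (bpt - p).1 with hg
    have hlin : IsLinearMap ℝ g := by
      constructor
      · intro z w; simp [hg, Prod.fst_add, Prod.snd_add]; ring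
      · intro c z; simp [hg, Prod.smul_fst, Prod.smul_snd, smul_eq_mul]; ring
    have hconv : Convex ℝ {w : Pt | g w < g p} := convex_halfSpace_lt hlin (g p)
    have hsub : ((X.erase bpt : Finset Pt) : Set Pt) ⊆ {w : Pt | g w < g p} := by
      intro y hy
      simp only [Finset.coe_erase, Set.mem_diff, Set.mem_singleton_iff, Finset.mem_coe] at hy
      have := key' y hy.1 hy.2
      simp only [det2, hg, Set.mem_setOf_eq] at this ⊢
      have e1 : (y - p).1 = y.1 - p.1 := rfl
      have e2 : (y - p).2 = y.2 - p.2 := rfl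
      rw [e1, e2] at this
      linarith
    have := hconv.convexHull_subset_iff.2 hsub hmem
    simp only [Set.mem_setOf_eq, hg] at this
    have e1 : (bpt - p).1 = bpt.1 - p.1 := rfl
    have e2 : (bpt - p).2 = bpt.2 - p.2 := rfl
    rw [e1, e2] at this
    nlinarith
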